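/- Let (τ_n)_{n≥0} be independent nonnegative square-integrable random variables with means m_n := E[τ_n] > 0 such that Σ_n m_n < ∞, sup_n E[τ_n²]/m_n² < ∞, and m_n/s_n → 0, where s_n := Σ_{k≥n} m_k. Then T_n/s_n → 1 in probability as n → ∞, where T_n := Σ_{k≥n} τ_k (almost surely finite). -/

import Mathlib

open Filter MeasureTheory ProbabilityTheory

/-- Gradual regime, weak law of large numbers: if the `τ_n` are independent nonnegative
square-integrable with means `m_n > 0`, `Σ m_n < ∞`, `sup_n E[τ_n²]/m_n² < ∞` and
`m_n/s_n → 0`, then `T_n/s_n → 1` in probability, where `T_n = Σ_{k≥n} τ_k` and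
`s_n = Σ_{k≥n} m_k`. -/
theorem stmt7 {Ω : Type*} [MeasurableSpace Ω] (P : Measure Ω) [IsProbabilityMeasure P]
    (τ : ℕ → Ω → ℝ) (hτpos : ∀ n, ∀ ω, 0 ≤ τ n ω)
    (hL2 : ∀ n, MemLp (τ n) 2 P)
    (hindep : iIndepFun τ P)
    (m : ℕ → ℝ) (hm : ∀ n, m n = ∫ ω, τ n ω ∂P) (hmpos : ∀ n, 0 < m n)
    (hsum : Summable m)
    (s : ℕ → ℝ) (hs : ∀ n, s n = ∑' k : ℕ, m (n + k))
    (hmom2 : ∃ C : ℝ, ∀ n, (∫ ω, (τ n ω) ^ 2 ∂P) / (m n) ^ 2 ≤ C)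
    (hratio : Tendsto (fun n => m n / s n) atTop (nhds 0))
    (T : ℕ → Ω → ℝ) (hT : ∀ n ω, T n ω = ∑' k : ℕ, τ (n + k) ω) :
    ∀ ε > 0, Tendsto (fun n => P {ω | ε ≤ |T n ω / s n - 1|}) atTop (nhds 0) := by
  have hτmeas : ∀ k, AEMeasurable (τ k) P := fun k => (hL2 k).aestronglyMeasurable.aemeasurable
  have hτint : ∀ k, Integrable (τ k) P := fun k => (hL2 k).integrable one_le_two
  obtain ⟨C, hC⟩ := hmom2
  have hC0 : 0 ≤ C := by
    refine le_trans ?_ (hC 0)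
    have h1 : 0 ≤ ∫ ω, (τ 0 ω) ^ 2 ∂P := integral_nonneg fun ω => sq_nonneg _
    positivity
  -- summable tails
  have htail : ∀ n, Summable (fun k => m (n + k)) :=
    fun n => hsum.comp_injective (add_right_injective n)
  have hm_le_s : ∀ j, m j ≤ s j := by
    intro j
    rw [hs j]
    have := Summable.le_tsum (htail j) 0 fun k _ => (hmpos _).le
    simpa using this
  have hspos : ∀ n, 0 < s n := fun n => lt_of_lt_of_le (hmpos n) (hm_le_s n)
  have hs_succ : ∀ n, s n = m n + s (n + 1) := by
    intro n
    rw [hs n, hs (n + 1), Summable.tsum_eq_zero_add (htail n)]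
    rw [show n + 0 = n from rfl]
    congr 1
    exact tsum_congr fun k => by congr 1; omega
  have hs_anti : Antitone s := by
    refine antitone_nat_of_succ_le fun n => ?_
    rw [hs_succ n]
    linarith [hmpos n]
  have htailsq : ∀ n, Summable (fun k => m (n + k) ^ 2) := by
    intro n
    refine Summable.of_nonneg_of_le (fun k => sq_nonneg _) (fun k => ?_) ((htail n).mul_left (s n))
    have h1 : m (n + k) ≤ s n := (hm_le_s (n + k)).trans (hs_anti (by omega))
    nlinarith [(hmpos (n + k)).le]
  -- a.s. summability of the τ's
  have hmeasF : ∀ k, AEMeasurable (fun ω => ENNReal.ofReal (τ k ω)) P :=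
    fun k => (hτmeas k).ennreal_ofReal
  have hAS : ∀ᵐ ω ∂P, Summable fun k => τ k ω := by
    have hlint : ∫⁻ ω, ∑' k, ENNReal.ofReal (τ k ω) ∂P ≠ ⊤ := by
      rw [lintegral_tsum hmeasF]
      have h1 : ∀ k, ∫⁻ ω, ENNReal.ofReal (τ k ω) ∂P = ENNReal.ofReal (m k) := by
        intro k
        rw [hm k, ofReal_integral_eq_lintegral_ofReal (hτint k)
          (Filter.Eventually.of_forall (hτpos k))]
      simp_rw [h1]
      rw [← ENNReal.ofReal_tsum_of_nonneg (fun k => (hmpos k).le) hsum]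
      exact ENNReal.ofReal_ne_top
    have hae := ae_lt_top' (AEMeasurable.ennreal_tsum hmeasF) hlint
    filter_upwards [hae] with ω hω
    refine (ENNReal.summable_toReal hω.ne).congr fun k => ?_
    exact ENNReal.toReal_ofReal (hτpos k ω)
  -- partial sums
  set S : ℕ → ℕ → Ω → ℝ := fun n N ω => ∑ k ∈ Finset.range N, τ (n + k) ω with hSdef
  have hconv : ∀ n, ∀ᵐ ω ∂P, Tendsto (fun N => S n N ω) atTop (nhds (T n ω)) := by
    intro n
    filter_upwards [hAS] with ω hω
    have h2 : Summable fun k => τ (n + k) ω := hω.comp_injective (add_right_injective n)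
    rw [hT n ω]
    exact h2.hasSum.tendsto_sum_nat
  have hSmem : ∀ n N, MemLp (S n N) 2 P := by
    intro n N
    have := memLp_finsetSum (Finset.range N) (μ := P) (f := fun k => τ (n + k))
      (fun k _ => hL2 (n + k))
    exact this
  have hSmeas : ∀ n N, AEMeasurable (S n N) P :=
    fun n N => (hSmem n N).aestronglyMeasurable.aemeasurable
  have hTmeas : ∀ n, AEMeasurable (T n) P :=
    fun n => aemeasurable_of_tendsto_metrizable_ae atTop (fun N => hSmeas n N) (hconv n)
  -- variance bound for each τ
  have hvar_le : ∀ i, variance (τ i) P ≤ C * m i ^ 2 := by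
    intro i
    have h1 : variance (τ i) P = (∫ ω, τ i ω ^ 2 ∂P) - (∫ ω, τ i ω ∂P) ^ 2 := by
      simpa using variance_eq_sub (hL2 i)
    have h2 : (∫ ω, τ i ω ^ 2 ∂P) ≤ C * m i ^ 2 := by
      have h3 := hC i
      have h4 : 0 < m i ^ 2 := pow_pos (hmpos i) 2
      rw [div_le_iff₀ h4] at h3
      linarith
    nlinarith [sq_nonneg (∫ ω, τ i ω ∂P)]
  -- the key second moment bound
  have key : ∀ n, ∫⁻ ω, ENNReal.ofReal ((T n ω - s n) ^ 2) ∂P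
      ≤ ENNReal.ofReal (C * ∑' k, m (n + k) ^ 2) := by
    intro n
    have hg_meas : ∀ N, AEMeasurable (fun ω => ENNReal.ofReal ((S n N ω - s n) ^ 2)) P :=
      fun N => (((hSmeas n N).sub aemeasurable_const).pow_const 2).ennreal_ofReal
    have hglim : ∀ᵐ ω ∂P, Tendsto (fun N => ENNReal.ofReal ((S n N ω - s n) ^ 2)) atTop
        (nhds (ENNReal.ofReal ((T n ω - s n) ^ 2))) := by
      filter_upwards [hconv n] with ω hω
      exact ENNReal.tendsto_ofReal ((hω.sub_const (s n)).pow 2)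
    have step1 : ∫⁻ ω, ENNReal.ofReal ((T n ω - s n) ^ 2) ∂P
        ≤ liminf (fun N => ∫⁻ ω, ENNReal.ofReal ((S n N ω - s n) ^ 2) ∂P) atTop := by
      refine le_trans (le_of_eq (lintegral_congr_ae ?_)) (lintegral_liminf_le' hg_meas)
      filter_upwards [hglim] with ω hω
      exact hω.liminf_eq.symm
    have hS_sub_mem : ∀ N, MemLp (fun ω => S n N ω - s n) 2 P :=
      fun N => (hSmem n N).sub (memLp_const _)
    have hint2 : ∀ N, Integrable (fun ω => (S n N ω - s n) ^ 2) P :=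
      fun N => (hS_sub_mem N).integrable_sq
    have hg_int : ∀ N, ∫⁻ ω, ENNReal.ofReal ((S n N ω - s n) ^ 2) ∂P
        = ENNReal.ofReal (∫ ω, (S n N ω - s n) ^ 2 ∂P) :=
      fun N => (ofReal_integral_eq_lintegral_ofReal (hint2 N)
        (Filter.Eventually.of_forall fun ω => sq_nonneg _)).symm
    have hmean : ∀ N, ∫ ω, S n N ω ∂P = ∑ k ∈ Finset.range N, m (n + k) := by
      intro N
      rw [hSdef]
      rw [integral_finset_sum _ (fun k _ => hτint (n + k))]
      exact Finset.sum_congr rfl fun k _ => (hm (n + k)).symm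
    -- variance of partial sums
    have hvs : ∀ N, variance (S n N) P = ∑ k ∈ Finset.range N, variance (τ (n + k)) P := by
      intro N
      have h1 : variance (∑ i ∈ Finset.Ico n (n + N), τ i) P
          = ∑ i ∈ Finset.Ico n (n + N), variance (τ i) P := by
        refine IndepFun.variance_sum (fun i _ => hL2 i) ?_
        intro i _ j _ hij
        exact hindep.indepFun hij
      have h2 : (∑ i ∈ Finset.Ico n (n + N), τ i) = S n N := by
        funext ω
        rw [Finset.sum_apply, Finset.sum_Ico_eq_sum_range]
        simp [hSdef]
      have h3 : ∑ i ∈ Finset.Ico n (n + N), variance (τ i) P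
          = ∑ k ∈ Finset.range N, variance (τ (n + k)) P := by
        rw [Finset.sum_Ico_eq_sum_range]
        simp
      rw [h2, h3] at h1
      exact h1
    have hintegral_bound : ∀ N, ∫ ω, (S n N ω - s n) ^ 2 ∂P
        ≤ C * ∑ k ∈ Finset.range N, m (n + k) ^ 2
          + (∑ k ∈ Finset.range N, m (n + k) - s n) ^ 2 := by
      intro N
      have hXsq : Integrable (fun ω => S n N ω ^ 2) P := (hSmem n N).integrable_sq
      have hXint1 : Integrable (S n N) P := (hSmem n N).integrable one_le_two
      have hexp : ∫ ω, (S n N ω - s n) ^ 2 ∂P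
          = ∫ ω, S n N ω ^ 2 ∂P - 2 * s n * ∫ ω, S n N ω ∂P + s n ^ 2 := by
        have hsub : Integrable (fun ω => S n N ω ^ 2 - 2 * s n * S n N ω) P :=
          hXsq.sub (hXint1.const_mul (2 * s n))
        have e : ∀ ω : Ω, (S n N ω - s n) ^ 2
            = (S n N ω ^ 2 - 2 * s n * S n N ω) + s n ^ 2 := fun ω => by ring
        simp_rw [e]
        rw [integral_add hsub (integrable_const _),
          integral_sub hXsq (hXint1.const_mul (2 * s n)), integral_const_mul, integral_const]
        simp
      have hvar' : variance (S n N) P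
          = (∫ ω, S n N ω ^ 2 ∂P) - (∫ ω, S n N ω ∂P) ^ 2 := by
        simpa using variance_eq_sub (hSmem n N)
      have hVle : variance (S n N) P ≤ C * ∑ k ∈ Finset.range N, m (n + k) ^ 2 := by
        rw [hvs N]
        calc ∑ k ∈ Finset.range N, variance (τ (n + k)) P
            ≤ ∑ k ∈ Finset.range N, C * m (n + k) ^ 2 :=
              Finset.sum_le_sum fun k _ => hvar_le (n + k)
          _ = C * ∑ k ∈ Finset.range N, m (n + k) ^ 2 := (Finset.mul_sum _ _ _).symm
      rw [hexp, hmean N]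
      rw [hmean N] at hvar'
      nlinarith [hvar', hVle]
    -- pass to the limit
    have h0 : (∑' k, m (n + k)) - s n = 0 := by rw [hs n]; ring
    have hb2 : Tendsto (fun N => (∑ k ∈ Finset.range N, m (n + k) - s n) ^ 2)
        atTop (nhds 0) := by
      have h1 := ((htail n).hasSum.tendsto_sum_nat).sub_const (s n)
      rw [h0] at h1
      simpa using h1.pow 2
    have hb_tend : Tendsto (fun N => C * ∑ k ∈ Finset.range N, m (n + k) ^ 2
        + (∑ k ∈ Finset.range N, m (n + k) - s n) ^ 2)
        atTop (nhds (C * ∑' k, m (n + k) ^ 2)) := by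
      have h1 := ((htailsq n).hasSum.tendsto_sum_nat).const_mul C
      simpa using h1.add hb2
    calc ∫⁻ ω, ENNReal.ofReal ((T n ω - s n) ^ 2) ∂P
        ≤ liminf (fun N => ∫⁻ ω, ENNReal.ofReal ((S n N ω - s n) ^ 2) ∂P) atTop := step1
      _ ≤ liminf (fun N => ENNReal.ofReal (C * ∑ k ∈ Finset.range N, m (n + k) ^ 2
          + (∑ k ∈ Finset.range N, m (n + k) - s n) ^ 2)) atTop := by
          refine liminf_le_liminf (Filter.Eventually.of_forall fun N => ?_)
          rw [hg_int N]
          exact ENNReal.ofReal_le_ofReal (hintegral_bound N)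
      _ = ENNReal.ofReal (C * ∑' k, m (n + k) ^ 2) :=
          (ENNReal.tendsto_ofReal hb_tend).liminf_eq
  -- conclusion
  intro ε hε
  have cheb : ∀ n, P {ω | ε ≤ |T n ω / s n - 1|}
      ≤ ENNReal.ofReal ((C / ε ^ 2) * ((∑' k, m (n + k) ^ 2) / s n ^ 2)) := by
    intro n
    have hsn := hspos n
    have hsubset : {ω | ε ≤ |T n ω / s n - 1|}
        ⊆ {ω | ENNReal.ofReal ((ε * s n) ^ 2) ≤ ENNReal.ofReal ((T n ω - s n) ^ 2)} := by
      intro ω hω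
      simp only [Set.mem_setOf_eq] at *
      rw [ENNReal.ofReal_le_ofReal_iff (sq_nonneg _)]
      have e1 : T n ω / s n - 1 = (T n ω - s n) / s n := by field_simp
      rw [e1, abs_div, abs_of_pos hsn, le_div_iff₀ hsn] at hω
      calc (ε * s n) ^ 2 ≤ |T n ω - s n| ^ 2 := by
            apply pow_le_pow_left₀ (mul_nonneg hε.le hsn.le) hω
        _ = (T n ω - s n) ^ 2 := sq_abs _
    have hc0 : ENNReal.ofReal ((ε * s n) ^ 2) ≠ 0 :=
      (ENNReal.ofReal_pos.mpr (pow_pos (mul_pos hε hsn) 2)).ne'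
    have hTm2 : AEMeasurable (fun ω => ENNReal.ofReal ((T n ω - s n) ^ 2)) P :=
      (((hTmeas n).sub aemeasurable_const).pow_const 2).ennreal_ofReal
    have hmark := meas_ge_le_lintegral_div (μ := P) hTm2 hc0 ENNReal.ofReal_ne_top
    calc P {ω | ε ≤ |T n ω / s n - 1|}
        ≤ P {ω | ENNReal.ofReal ((ε * s n) ^ 2) ≤ ENNReal.ofReal ((T n ω - s n) ^ 2)} :=
          measure_mono hsubset
      _ ≤ (∫⁻ ω, ENNReal.ofReal ((T n ω - s n) ^ 2) ∂P) / ENNReal.ofReal ((ε * s n) ^ 2) :=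
          hmark
      _ ≤ ENNReal.ofReal (C * ∑' k, m (n + k) ^ 2) / ENNReal.ofReal ((ε * s n) ^ 2) := by
          gcongr
          exact key n
      _ = ENNReal.ofReal ((C * ∑' k, m (n + k) ^ 2) / (ε * s n) ^ 2) :=
          (ENNReal.ofReal_div_of_pos (pow_pos (mul_pos hε hsn) 2)).symm
      _ = ENNReal.ofReal ((C / ε ^ 2) * ((∑' k, m (n + k) ^ 2) / s n ^ 2)) := by
          congr 1
          rw [div_mul_div_comm, ← mul_pow]
  have hu0 : Tendsto (fun n => (∑' k, m (n + k) ^ 2) / s n ^ 2) atTop (nhds 0) := by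
    rw [Metric.tendsto_atTop]
    intro δ hδ
    obtain ⟨N₀, hN₀⟩ := (Metric.tendsto_atTop.mp hratio) (δ / 2) (by positivity)
    refine ⟨N₀, fun n hn => ?_⟩
    have hterm : ∀ k, m (n + k) ^ 2 ≤ (δ / 2 * s n) * m (n + k) := by
      intro k
      have h1 : dist (m (n + k) / s (n + k)) 0 < δ / 2 := hN₀ (n + k) (by omega)
      rw [Real.dist_eq, sub_zero, abs_of_pos (div_pos (hmpos _) (hspos _))] at h1
      have h2 : m (n + k) < δ / 2 * s (n + k) := by
        rw [div_lt_iff₀ (hspos _)] at h1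
        linarith
      have h3 : s (n + k) ≤ s n := hs_anti (by omega)
      have h4 : 0 < δ / 2 := by positivity
      nlinarith [mul_le_mul_of_nonneg_right h2.le (hmpos (n + k)).le,
        mul_le_mul_of_nonneg_right (mul_le_mul_of_nonneg_left h3 h4.le) (hmpos (n + k)).le]
    have hub : (∑' k, m (n + k) ^ 2) / s n ^ 2 ≤ δ / 2 := by
      rw [div_le_iff₀ (pow_pos (hspos n) 2)]
      calc ∑' k, m (n + k) ^ 2 ≤ ∑' k, (δ / 2 * s n) * m (n + k) :=
            Summable.tsum_le_tsum hterm (htailsq n) ((htail n).mul_left _)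
        _ = δ / 2 * s n * s n := by rw [tsum_mul_left, ← hs n]
        _ = δ / 2 * s n ^ 2 := by ring
    have hnn : 0 ≤ (∑' k, m (n + k) ^ 2) / s n ^ 2 := by
      apply div_nonneg _ (sq_nonneg _)
      exact tsum_nonneg fun k => sq_nonneg _
    show dist ((∑' k, m (n + k) ^ 2) / s n ^ 2) 0 < δ
    rw [Real.dist_eq, sub_zero, abs_of_nonneg hnn]
    linarith
  refine tendsto_of_tendsto_of_tendsto_of_le_of_le tendsto_const_nhds ?_
    (fun n => zero_le) (fun n => cheb n)
  have := ENNReal.tendsto_ofReal (hu0.const_mul (C / ε ^ 2))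
  simpa using this
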